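/- Let L: R^d → R be Lipschitz with constant C, and let ρ, ρ̃ be Borel probability measures on R^d with finite second moments. For a ∈ (0,1], define the a-quantile q_a[ρ] := inf{ q : a ≤ ρ({θ : L(θ) ≤ q}) }. Then for any β ∈ (0,1], |∫_{β/2}^{β} q_a[ρ] da − ∫_{β/2}^{β} q_a[ρ̃] da| ≤ C·sqrt(β/2)·W₂(ρ, ρ̃), where W₂ denotes the 2-Wasserstein distance. -/

import Mathlib

open MeasureTheory Filter

noncomputable section

/-- The `a`-quantile of a measure `ρ` under the function `L`:
`q_a[ρ] := inf { q : a ≤ ρ({θ : L θ ≤ q}) }`. -/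
def quantile {d : ℕ} (L : EuclideanSpace ℝ (Fin d) → ℝ)
    (ρ : Measure (EuclideanSpace ℝ (Fin d))) (a : ℝ) : ℝ :=
  sInf {q : ℝ | a ≤ (ρ {θ | L θ ≤ q}).toReal}

/-- The 2-Wasserstein distance between two measures on `ℝ^d`, defined as the infimum over
all couplings of the square root of the second moment of the displacement. -/
def W2 {d : ℕ} (μ ν : Measure (EuclideanSpace ℝ (Fin d))) : ℝ :=
  sInf {c : ℝ |
    ∃ π : Measure (EuclideanSpace ℝ (Fin d) × EuclideanSpace ℝ (Fin d)),
      π.map Prod.fst = μ ∧ π.map Prod.snd = ν ∧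
      c = Real.sqrt (∫ p, ‖p.1 - p.2‖ ^ 2 ∂π)}

namespace QWaux
open ProbabilityTheory Set
open scoped ENNReal
set_option linter.unusedSectionVars false

noncomputable def Qf (μ : Measure ℝ) (a : ℝ) : ℝ :=
  if 0 < a ∧ a < 1 then sInf {q : ℝ | a ≤ (μ (Iic q)).toReal} else 0

variable {μ : Measure ℝ} [IsProbabilityMeasure μ]

lemma setQ_eq (a : ℝ) [IsProbabilityMeasure μ] :
    {q : ℝ | a ≤ (μ (Iic q)).toReal} = {q | a ≤ cdf μ q} := by
  simp only [cdf_eq_real, measureReal_def]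

omit [IsProbabilityMeasure μ] in
lemma setQ_nonempty {a : ℝ} (ha : a < 1) : {q : ℝ | a ≤ cdf μ q}.Nonempty := by
  obtain ⟨q, hq⟩ := ((tendsto_order.1 (tendsto_cdf_atTop μ)).1 a ha).exists
  exact ⟨q, hq.le⟩

omit [IsProbabilityMeasure μ] in
lemma setQ_bddBelow {a : ℝ} (ha : 0 < a) : BddBelow {q : ℝ | a ≤ cdf μ q} := by
  obtain ⟨q, hq⟩ := ((tendsto_order.1 (tendsto_cdf_atBot μ)).2 a ha).exists
  exact ⟨q, fun x hx => le_of_not_gt fun hlt =>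
    absurd (le_trans hx (monotone_cdf μ hlt.le)) (not_le.2 hq)⟩

lemma Qf_eq {a : ℝ} (ha : 0 < a) (ha' : a < 1) :
    Qf μ a = sInf {q | a ≤ cdf μ q} := by
  rw [Qf, if_pos ⟨ha, ha'⟩, setQ_eq]

lemma le_cdf_Qf {a : ℝ} (ha : 0 < a) (ha' : a < 1) : a ≤ cdf μ (Qf μ a) := by
  rw [Qf_eq ha ha']
  set S := {q | a ≤ cdf μ q} with hS
  have hne := setQ_nonempty (μ := μ) ha'
  have hbdd := setQ_bddBelow (μ := μ) ha
  have hev : ∀ᶠ x in nhdsWithin (sInf S) (Ioi (sInf S)), a ≤ cdf μ x := by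
    filter_upwards [self_mem_nhdsWithin] with x hx
    obtain ⟨y, hy, hyx⟩ := (Real.lt_sInf_add_pos hne (sub_pos.2 hx)).imp (fun y h => h)
    · exact le_trans hy ((monotone_cdf μ) (by linarith))
  have hc : Tendsto (cdf μ) (nhdsWithin (sInf S) (Ioi (sInf S))) (nhds (cdf μ (sInf S))) :=
    ((cdf μ).right_continuous (sInf S)).tendsto.mono_left
      (nhdsWithin_mono _ Ioi_subset_Ici_self)
  exact ge_of_tendsto hc hev

lemma Qf_le_iff {a s : ℝ} (ha : 0 < a) (ha' : a < 1) :
    Qf μ a ≤ s ↔ a ≤ cdf μ s := by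
  constructor
  · intro h
    exact le_trans (le_cdf_Qf ha ha') (monotone_cdf μ h)
  · intro h
    rw [Qf_eq ha ha']
    exact csInf_le (setQ_bddBelow ha) h


lemma toReal_Iio_le_of_le_Qf {a t : ℝ} (ha : 0 < a) (ha' : a < 1) (h : t ≤ Qf μ a) :
    (μ (Iio t)).toReal ≤ a := by
  by_contra hlt
  push_neg at hlt
  have hU : Iio t = ⋃ n : ℕ, Iic (t - 1/(n+1)) := by
    ext x
    simp only [mem_Iio, mem_iUnion, mem_Iic]
    constructor
    · intro hx
      obtain ⟨n, hn⟩ := exists_nat_one_div_lt (sub_pos.2 hx)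
      exact ⟨n, by linarith⟩
    · rintro ⟨n, hn⟩
      have : (0:ℝ) < 1/(n+1) := by positivity
      linarith
  have hmono : Monotone fun n : ℕ => Iic (t - 1/(n+1)) := by
    intro m n hmn
    apply Iic_subset_Iic.2
    have h1 : (1:ℝ)/(n+1) ≤ 1/(m+1) := by
      apply one_div_le_one_div_of_le (by positivity)
      have : (m:ℝ) ≤ n := Nat.cast_le.2 hmn
      linarith
    linarith
  have hsup : μ (Iio t) = ⨆ n : ℕ, μ (Iic (t - 1/(n+1))) := by
    rw [hU, hmono.directed_le.measure_iUnion]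
  have : ENNReal.ofReal a < μ (Iio t) := by
    have hfin : μ (Iio t) ≠ ⊤ := measure_ne_top _ _
    rw [← ENNReal.ofReal_toReal hfin]
    exact ENNReal.ofReal_lt_ofReal_iff_of_nonneg ha.le |>.2 hlt
  rw [hsup] at this
  obtain ⟨n, hn⟩ := lt_iSup_iff.1 this
  have hcdf : a ≤ cdf μ (t - 1/(n+1)) := by
    rw [cdf_eq_real, measureReal_def]
    have := ENNReal.toReal_mono (measure_ne_top _ _) hn.le
    rwa [ENNReal.toReal_ofReal ha.le] at this
  have := (Qf_le_iff ha ha').2 hcdf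
  have hpos : (0:ℝ) < 1/(n+1) := by positivity
  linarith

lemma measurable_Qf : Measurable (Qf μ) := by
  apply measurable_of_Iic
  intro s
  have : Qf μ ⁻¹' Iic s =
      (Ioo (0:ℝ) 1 ∩ Iic (cdf μ s)) ∪ ((Ioo (0:ℝ) 1)ᶜ ∩ {a | (0:ℝ) ≤ s}) := by
    ext a
    by_cases ha : 0 < a ∧ a < 1
    · simp only [mem_preimage, mem_Iic, mem_union, mem_inter_iff, mem_Ioo, mem_compl_iff,
        mem_setOf_eq]
      rw [Qf_le_iff ha.1 ha.2]
      tauto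
    · have h0 : Qf μ a = 0 := by rw [Qf, if_neg ha]
      simp only [mem_preimage, mem_Iic, h0, mem_union, mem_inter_iff, mem_Ioo, mem_compl_iff,
        mem_setOf_eq]
      tauto
  rw [this]
  apply MeasurableSet.union
  · exact measurableSet_Ioo.inter measurableSet_Iic
  · apply measurableSet_Ioo.compl.inter
    by_cases h : (0:ℝ) ≤ s
    · simp [h]
    · simp [h]


lemma tri_vol (x y : ℝ) :
    (volume : Measure (ℝ × ℝ)) {p : ℝ × ℝ | y ≤ p.2 ∧ p.2 < p.1 ∧ p.1 ≤ x}
      = ENNReal.ofReal ((max (x - y) 0)^2 / 2) := by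
  rcases lt_or_ge x y with hxy | hxy
  · have : {p : ℝ × ℝ | y ≤ p.2 ∧ p.2 < p.1 ∧ p.1 ≤ x} = ∅ := by
      ext p; simp only [mem_setOf_eq, mem_empty_iff_false, iff_false]
      rintro ⟨h1, h2, h3⟩; linarith
    rw [this, measure_empty, max_eq_right (by linarith), ← ENNReal.ofReal_zero]
    norm_num
  · have hmax : max (x - y) 0 = x - y := max_eq_left (by linarith)
    have hT : MeasurableSet {p : ℝ × ℝ | y ≤ p.2 ∧ p.2 < p.1 ∧ p.1 ≤ x} := by
      apply MeasurableSet.inter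
      · exact measurableSet_le measurable_const measurable_snd
      · exact (measurableSet_lt measurable_snd measurable_fst).inter
          (measurableSet_le measurable_fst measurable_const)
    rw [Measure.volume_eq_prod, Measure.prod_apply hT]
    have hsec : ∀ t : ℝ, (Prod.mk t ⁻¹' {p : ℝ × ℝ | y ≤ p.2 ∧ p.2 < p.1 ∧ p.1 ≤ x})
        = if t ≤ x then Ico y t else ∅ := by
      intro t
      ext s
      by_cases ht : t ≤ x <;> simp [ht, mem_Ico, and_comm]
    simp_rw [hsec]
    have : (∫⁻ t, volume (if t ≤ x then Ico y t else ∅))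
        = ∫⁻ t in Iic x, ENNReal.ofReal (t - y) := by
      rw [← lintegral_indicator measurableSet_Iic]
      congr 1
      funext t
      by_cases ht : t ≤ x
      · simp [ht, indicator_of_mem, Real.volume_Ico, mem_Iic]
      · simp [ht, indicator_of_notMem, mem_Iic]
    rw [this]
    have hsplit : (Iic x : Set ℝ) = Iic y ∪ Ioc y x := (Iic_union_Ioc_eq_Iic hxy).symm
    rw [hsplit, lintegral_union measurableSet_Ioc (Iic_disjoint_Ioc le_rfl)]
    have h1 : ∫⁻ t in Iic y, ENNReal.ofReal (t - y) = 0 := by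
      have : ∀ t ∈ Iic y, ENNReal.ofReal (t - y) = (0:ℝ≥0∞) := by
        intro t ht
        simp only [mem_Iic] at ht
        exact ENNReal.ofReal_eq_zero.2 (by linarith)
      rw [setLIntegral_congr_fun measurableSet_Iic this]
      simp
    have h2 : ∫⁻ t in Ioc y x, ENNReal.ofReal (t - y) = ENNReal.ofReal ((x - y)^2 / 2) := by
      have hint : IntegrableOn (fun t => t - y) (Ioc y x) volume :=
        (continuous_id.sub continuous_const).integrableOn_Ioc
      have hae : 0 ≤ᵐ[volume.restrict (Ioc y x)] fun t => t - y := by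
        filter_upwards [ae_restrict_mem measurableSet_Ioc] with t ht
        simp only [mem_Ioc] at ht
        simp only [Pi.zero_apply]
        linarith [ht.1]
      rw [← ofReal_integral_eq_lintegral_ofReal hint hae]
      · congr 1
        have := intervalIntegral.integral_of_le (μ := volume) (f := fun t => t - y) hxy
        rw [← this]
        have heq : ∫ t in y..x, (t - y) = (∫ t in y..x, t) - ∫ t in y..x, (y:ℝ) :=
          intervalIntegral.integral_sub intervalIntegral.intervalIntegrable_id
            (intervalIntegrable_const)
        rw [heq, integral_id, intervalIntegral.integral_const]
        simp only [smul_eq_mul]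
        ring
    rw [h1, h2, zero_add, hmax]



lemma sq_repr (x y : ℝ) : ENNReal.ofReal ((x - y)^2)
    = 2 * ((volume : Measure (ℝ × ℝ)) {p : ℝ × ℝ | y ≤ p.2 ∧ p.2 < p.1 ∧ p.1 ≤ x}
        + (volume : Measure (ℝ × ℝ)) {p : ℝ × ℝ | x ≤ p.2 ∧ p.2 < p.1 ∧ p.1 ≤ y}) := by
  rw [tri_vol, tri_vol, ← ENNReal.ofReal_add (by positivity) (by positivity),
    ← ENNReal.ofReal_ofNat 2, ← ENNReal.ofReal_mul (by norm_num)]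
  congr 1
  rcases le_total y x with h | h
  · rw [max_eq_left (by linarith), max_eq_right (by linarith)]
    ring
  · rw [max_eq_right (by linarith), max_eq_left (by linarith)]
    ring

variable {α : Type*} [MeasurableSpace α]

lemma swap_one (m : Measure α) [SFinite m] {f g : α → ℝ}
    (hf : Measurable f) (hg : Measurable g) :
    ∫⁻ ω, (volume : Measure (ℝ × ℝ)) {p : ℝ × ℝ | g ω ≤ p.2 ∧ p.2 < p.1 ∧ p.1 ≤ f ω} ∂m
      = ∫⁻ p : ℝ × ℝ, m {ω | g ω ≤ p.2 ∧ p.2 < p.1 ∧ p.1 ≤ f ω} := by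
  set U : Set (α × ℝ × ℝ) := {q | g q.1 ≤ q.2.2 ∧ q.2.2 < q.2.1 ∧ q.2.1 ≤ f q.1} with hUdef
  have hU : MeasurableSet U := by
    apply MeasurableSet.inter
    · exact measurableSet_le (hg.comp measurable_fst) (measurable_snd.comp measurable_snd)
    · exact (measurableSet_lt (measurable_snd.comp measurable_snd)
        (measurable_fst.comp measurable_snd)).inter
        (measurableSet_le (measurable_fst.comp measurable_snd) (hf.comp measurable_fst))
  have h1 : ∀ ω, (volume : Measure (ℝ × ℝ)) {p : ℝ × ℝ | g ω ≤ p.2 ∧ p.2 < p.1 ∧ p.1 ≤ f ω}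
      = ∫⁻ p : ℝ × ℝ, U.indicator (fun _ => (1:ℝ≥0∞)) (ω, p) := by
    intro ω
    have hsec : MeasurableSet (Prod.mk ω ⁻¹' U) := hU.preimage measurable_prodMk_left
    have : (fun p : ℝ × ℝ => U.indicator (fun _ => (1:ℝ≥0∞)) (ω, p)) = (Prod.mk ω ⁻¹' U).indicator (fun _ => (1:ℝ≥0∞)) := by
      funext p
      simp only [indicator, mem_preimage]
    rw [this, lintegral_indicator hsec]
    rw [lintegral_one, Measure.restrict_apply_univ]
    rfl
  have h2 : ∀ p : ℝ × ℝ, m {ω | g ω ≤ p.2 ∧ p.2 < p.1 ∧ p.1 ≤ f ω}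
      = ∫⁻ ω, U.indicator (fun _ => (1:ℝ≥0∞)) (ω, p) ∂m := by
    intro p
    have hsec : MeasurableSet ((fun ω => (ω, p)) ⁻¹' U) := hU.preimage (measurable_prodMk_right)
    have : (fun ω => U.indicator (fun _ => (1:ℝ≥0∞)) (ω, p)) = ((fun ω => (ω, p)) ⁻¹' U).indicator (fun _ => (1:ℝ≥0∞)) := by
      funext ω
      simp only [indicator, mem_preimage]
    rw [this, lintegral_indicator hsec]
    rw [lintegral_one, Measure.restrict_apply_univ]
    rfl
  simp_rw [h1, h2]
  exact lintegral_lintegral_swap ((measurable_const.indicator hU).aemeasurable)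

lemma swap_repr (m : Measure α) [SFinite m] {f g : α → ℝ}
    (hf : Measurable f) (hg : Measurable g) :
    ∫⁻ ω, ENNReal.ofReal ((f ω - g ω)^2) ∂m
      = 2 * ((∫⁻ p : ℝ × ℝ, m {ω | g ω ≤ p.2 ∧ p.2 < p.1 ∧ p.1 ≤ f ω})
          + ∫⁻ p : ℝ × ℝ, m {ω | f ω ≤ p.2 ∧ p.2 < p.1 ∧ p.1 ≤ g ω}) := by
  have hpt : ∀ ω, ENNReal.ofReal ((f ω - g ω)^2)
      = 2 * ((volume : Measure (ℝ × ℝ)) {p : ℝ × ℝ | g ω ≤ p.2 ∧ p.2 < p.1 ∧ p.1 ≤ f ω}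
          + (volume : Measure (ℝ × ℝ)) {p : ℝ × ℝ | f ω ≤ p.2 ∧ p.2 < p.1 ∧ p.1 ≤ g ω}) :=
    fun ω => sq_repr (f ω) (g ω)
  have hmeas1 : Measurable (fun ω =>
      (volume : Measure (ℝ × ℝ)) {p : ℝ × ℝ | g ω ≤ p.2 ∧ p.2 < p.1 ∧ p.1 ≤ f ω}) := by
    have : (fun ω => (volume : Measure (ℝ × ℝ)) {p : ℝ × ℝ | g ω ≤ p.2 ∧ p.2 < p.1 ∧ p.1 ≤ f ω})
        = fun ω => ENNReal.ofReal ((max (f ω - g ω) 0)^2 / 2) := by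
      funext ω; exact tri_vol (f ω) (g ω)
    rw [this]
    exact ENNReal.measurable_ofReal.comp
      ((((hf.sub hg).max measurable_const).pow_const 2).div_const 2)
  have hmeas2 : Measurable (fun ω =>
      (volume : Measure (ℝ × ℝ)) {p : ℝ × ℝ | f ω ≤ p.2 ∧ p.2 < p.1 ∧ p.1 ≤ g ω}) := by
    have : (fun ω => (volume : Measure (ℝ × ℝ)) {p : ℝ × ℝ | f ω ≤ p.2 ∧ p.2 < p.1 ∧ p.1 ≤ g ω})
        = fun ω => ENNReal.ofReal ((max (g ω - f ω) 0)^2 / 2) := by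
      funext ω; exact tri_vol (g ω) (f ω)
    rw [this]
    exact ENNReal.measurable_ofReal.comp
      ((((hg.sub hf).max measurable_const).pow_const 2).div_const 2)
  calc ∫⁻ ω, ENNReal.ofReal ((f ω - g ω)^2) ∂m
      = ∫⁻ ω, 2 * ((volume : Measure (ℝ × ℝ)) {p : ℝ × ℝ | g ω ≤ p.2 ∧ p.2 < p.1 ∧ p.1 ≤ f ω}
          + (volume : Measure (ℝ × ℝ)) {p : ℝ × ℝ | f ω ≤ p.2 ∧ p.2 < p.1 ∧ p.1 ≤ g ω}) ∂m := by
        exact lintegral_congr hpt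
    _ = 2 * ∫⁻ ω, ((volume : Measure (ℝ × ℝ)) {p : ℝ × ℝ | g ω ≤ p.2 ∧ p.2 < p.1 ∧ p.1 ≤ f ω}
          + (volume : Measure (ℝ × ℝ)) {p : ℝ × ℝ | f ω ≤ p.2 ∧ p.2 < p.1 ∧ p.1 ≤ g ω}) ∂m :=
        lintegral_const_mul' 2 _ (by norm_num)
    _ = 2 * ((∫⁻ ω, (volume : Measure (ℝ × ℝ)) {p : ℝ × ℝ | g ω ≤ p.2 ∧ p.2 < p.1 ∧ p.1 ≤ f ω} ∂m)
          + ∫⁻ ω, (volume : Measure (ℝ × ℝ)) {p : ℝ × ℝ | f ω ≤ p.2 ∧ p.2 < p.1 ∧ p.1 ≤ g ω} ∂m) := by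
        rw [lintegral_add_left hmeas1]
    _ = 2 * ((∫⁻ p : ℝ × ℝ, m {ω | g ω ≤ p.2 ∧ p.2 < p.1 ∧ p.1 ≤ f ω})
          + ∫⁻ p : ℝ × ℝ, m {ω | f ω ≤ p.2 ∧ p.2 < p.1 ∧ p.1 ≤ g ω}) := by
        rw [swap_one m hf hg, swap_one m hg hf]




lemma ofReal_toReal_sub_le {a b : ℝ≥0∞} (ha : a ≠ ⊤) (hb : b ≠ ⊤) :
    ENNReal.ofReal (a.toReal - b.toReal) ≤ a - b := by
  rcases le_total a b with h | h
  · have : a.toReal - b.toReal ≤ 0 := sub_nonpos.2 (ENNReal.toReal_mono hb h)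
    simp [ENNReal.ofReal_eq_zero.2 this]
  · rw [ENNReal.ofReal_sub _ ENNReal.toReal_nonneg, ENNReal.ofReal_toReal ha,
      ENNReal.ofReal_toReal hb]

section Core
variable {α : Type*} [MeasurableSpace α]

lemma key_compare (m : Measure α) [IsProbabilityMeasure m]
    {X Y : α → ℝ} (hX : Measurable X) (hY : Measurable Y)
    {u v : ℝ} (hu : 0 < u) (hv : v ≤ 1) (p : ℝ × ℝ) :
    (volume.restrict (Ioo u v)) {a | Qf (m.map Y) a ≤ p.2 ∧ p.2 < p.1 ∧ p.1 ≤ Qf (m.map X) a}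
      ≤ m {ω | Y ω ≤ p.2 ∧ p.2 < p.1 ∧ p.1 ≤ X ω} := by
  haveI : IsProbabilityMeasure (m.map X) := Measure.isProbabilityMeasure_map hX.aemeasurable
  haveI : IsProbabilityMeasure (m.map Y) := Measure.isProbabilityMeasure_map hY.aemeasurable
  by_cases hst : p.2 < p.1
  · set μ := m.map X
    set ν := m.map Y
    have hsub : {a | Qf ν a ≤ p.2 ∧ p.2 < p.1 ∧ p.1 ≤ Qf μ a} ∩ Ioo u v
        ⊆ Icc ((μ (Iio p.1)).toReal) (cdf ν p.2) := by
      rintro a ⟨⟨h1, _, h3⟩, ha⟩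
      have ha0 : 0 < a := lt_trans hu ha.1
      have ha1 : a < 1 := lt_of_lt_of_le ha.2 hv
      exact ⟨toReal_Iio_le_of_le_Qf ha0 ha1 h3, (Qf_le_iff ha0 ha1).1 h1⟩
    calc (volume.restrict (Ioo u v)) {a | Qf ν a ≤ p.2 ∧ p.2 < p.1 ∧ p.1 ≤ Qf μ a}
        = volume ({a | Qf ν a ≤ p.2 ∧ p.2 < p.1 ∧ p.1 ≤ Qf μ a} ∩ Ioo u v) :=
          Measure.restrict_apply' measurableSet_Ioo
      _ ≤ volume (Icc ((μ (Iio p.1)).toReal) (cdf ν p.2)) := measure_mono hsub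
      _ = ENNReal.ofReal (cdf ν p.2 - (μ (Iio p.1)).toReal) := Real.volume_Icc
      _ = ENNReal.ofReal ((ν (Iic p.2)).toReal - (μ (Iio p.1)).toReal) := by
          rw [cdf_eq_real, measureReal_def]
      _ ≤ ν (Iic p.2) - μ (Iio p.1) :=
          ofReal_toReal_sub_le (measure_ne_top _ _) (measure_ne_top _ _)
      _ ≤ m {ω | Y ω ≤ p.2 ∧ p.2 < p.1 ∧ p.1 ≤ X ω} := by
          rw [tsub_le_iff_right]
          have hmap1 : ν (Iic p.2) = m {ω | Y ω ≤ p.2} := by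
            rw [Measure.map_apply hY measurableSet_Iic]; rfl
          have hmap2 : μ (Iio p.1) = m {ω | X ω < p.1} := by
            rw [Measure.map_apply hX measurableSet_Iio]; rfl
          rw [hmap1, hmap2]
          have hsub2 : {ω | Y ω ≤ p.2}
              ⊆ {ω | Y ω ≤ p.2 ∧ p.2 < p.1 ∧ p.1 ≤ X ω} ∪ {ω | X ω < p.1} := by
            intro ω hω
            rcases lt_or_ge (X ω) p.1 with h | h
            · exact Or.inr h
            · exact Or.inl ⟨hω, hst, h⟩
          exact le_trans (measure_mono hsub2) (measure_union_le _ _)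
  · have : {a | Qf (m.map Y) a ≤ p.2 ∧ p.2 < p.1 ∧ p.1 ≤ Qf (m.map X) a} = ∅ := by
      ext a
      simp only [mem_setOf_eq, mem_empty_iff_false, iff_false]
      rintro ⟨_, h, _⟩
      exact hst h
    simp [this]

lemma core_ineq (m : Measure α) [IsProbabilityMeasure m]
    {X Y : α → ℝ} (hX : Measurable X) (hY : Measurable Y)
    {u v : ℝ} (hu : 0 < u) (hv : v ≤ 1) :
    ∫⁻ a in Ioo u v, ENNReal.ofReal ((Qf (m.map X) a - Qf (m.map Y) a)^2)
      ≤ ∫⁻ ω, ENNReal.ofReal ((X ω - Y ω)^2) ∂m := by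
  haveI : IsProbabilityMeasure (m.map X) := Measure.isProbabilityMeasure_map hX.aemeasurable
  haveI : IsProbabilityMeasure (m.map Y) := Measure.isProbabilityMeasure_map hY.aemeasurable
  rw [swap_repr (volume.restrict (Ioo u v)) measurable_Qf measurable_Qf,
    swap_repr m hX hY]
  apply mul_le_mul_right
  exact add_le_add (lintegral_mono (fun p => key_compare m hX hY hu hv p))
    (lintegral_mono (fun p => key_compare m hY hX hu hv p))

end Core

lemma Qf_dirac_zero (a : ℝ) : Qf (Measure.dirac (0:ℝ)) a = 0 := by
  unfold Qf
  by_cases ha : 0 < a ∧ a < 1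
  · rw [if_pos ha]
    have hset : {q : ℝ | a ≤ ((Measure.dirac (0:ℝ)) (Iic q)).toReal} = Ici 0 := by
      ext q
      simp only [mem_setOf_eq, mem_Ici, Measure.dirac_apply' _ (measurableSet_Iic : MeasurableSet (Iic q))]
      by_cases hq : (0:ℝ) ≤ q
      · simp [indicator_of_mem, mem_Iic, hq, ha.2.le]
      · simp only [mem_Iic, hq, not_false_iff, indicator_of_notMem]
        constructor
        · intro h; simp at h; linarith [ha.1]
        · intro h; exact h.elim
    rw [hset, csInf_Ici]
  · rw [if_neg ha]

end QWaux

open QWaux ProbabilityTheory Set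
open scoped ENNReal

/-- If `L` is Lipschitz with constant `C` and `ρ, ρ'` are Borel probability
measures with finite second moments, then for every `β ∈ (0,1]`,
`|∫_{β/2}^β q_a[ρ] da − ∫_{β/2}^β q_a[ρ'] da| ≤ C · √(β/2) · W₂(ρ, ρ')`. -/
theorem quantile_integral_wasserstein_stability {d : ℕ}
    (L : EuclideanSpace ℝ (Fin d) → ℝ) (C : ℝ)
    (hL : ∀ θ θ', |L θ - L θ'| ≤ C * ‖θ - θ'‖)
    (ρ ρ' : Measure (EuclideanSpace ℝ (Fin d)))
    [IsProbabilityMeasure ρ] [IsProbabilityMeasure ρ']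
    (hρ : Integrable (fun θ => ‖θ‖ ^ 2) ρ)
    (hρ' : Integrable (fun θ => ‖θ‖ ^ 2) ρ')
    (β : ℝ) (hβ : β ∈ Set.Ioc (0 : ℝ) 1) :
    |(∫ a in (β/2)..β, quantile L ρ a) - ∫ a in (β/2)..β, quantile L ρ' a|
      ≤ C * Real.sqrt (β / 2) * W2 ρ ρ' := by
  obtain ⟨hβ0, hβ1⟩ := hβ
  have hu : (0:ℝ) < β / 2 := by linarith
  have huv : β / 2 < β := by linarith
  -- L is continuous, hence measurable
  have hLip : LipschitzWith (⟨max C 0, le_max_right _ _⟩ : NNReal) L := by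
    apply LipschitzWith.of_dist_le_mul
    intro x y
    rw [Real.dist_eq, dist_eq_norm]
    calc |L x - L y| ≤ C * ‖x - y‖ := hL x y
      _ ≤ max C 0 * ‖x - y‖ :=
        mul_le_mul_of_nonneg_right (le_max_left _ _) (norm_nonneg _)
  have hLm : Measurable L := hLip.continuous.measurable
  -- the W2 candidate set
  set S : Set ℝ := {c : ℝ |
    ∃ π : Measure (EuclideanSpace ℝ (Fin d) × EuclideanSpace ℝ (Fin d)),
      π.map Prod.fst = ρ ∧ π.map Prod.snd = ρ' ∧
      c = Real.sqrt (∫ p, ‖p.1 - p.2‖ ^ 2 ∂π)} with hSdef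
  have hW2 : W2 ρ ρ' = sInf S := rfl
  have hSnonneg : ∀ c ∈ S, 0 ≤ c := by
    rintro c ⟨π, -, -, rfl⟩
    exact Real.sqrt_nonneg _
  have hSne : S.Nonempty := by
    refine ⟨_, ρ.prod ρ', ?_, ?_, rfl⟩
    · rw [Measure.map_fst_prod]; simp
    · rw [Measure.map_snd_prod]; simp
  rcases lt_or_ge C 0 with hC | hC
  · -- degenerate case : C < 0 forces the space to be a subsingleton
    haveI hsub : Subsingleton (EuclideanSpace ℝ (Fin d)) := by
      constructor
      intro x y
      by_contra hxy
      have h1 : 0 < ‖x - y‖ := by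
        rw [norm_pos_iff, sub_ne_zero]; exact hxy
      have := hL x y
      nlinarith [abs_nonneg (L x - L y)]
    have hρeq : ρ = ρ' := by
      ext s hs
      rcases eq_empty_or_nonempty s with rfl | ⟨x, hx⟩
      · simp
      · have : s = univ := by
          ext y; simp only [mem_univ, iff_true]
          rwa [Subsingleton.elim y x]
        rw [this]
        simp [measure_univ]
    have hW0 : W2 ρ ρ' = 0 := by
      have hdiag : Measurable (fun x : EuclideanSpace ℝ (Fin d) => (x, x)) :=
        measurable_id.prodMk measurable_id
      have hsm : AEStronglyMeasurable
          (fun p : (EuclideanSpace ℝ (Fin d)) × (EuclideanSpace ℝ (Fin d)) =>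
            ‖p.1 - p.2‖^2) (ρ.map (fun x => (x, x))) :=
        ((continuous_fst.sub continuous_snd).norm.pow 2).aestronglyMeasurable
      have h0mem : (0:ℝ) ∈ S := by
        refine ⟨ρ.map (fun x => (x, x)), ?_, ?_, ?_⟩
        · rw [Measure.map_map measurable_fst hdiag]
          exact Measure.map_id'
        · rw [Measure.map_map measurable_snd hdiag, ← hρeq]
          exact Measure.map_id'
        · rw [integral_map hdiag.aemeasurable hsm]
          simp
      rw [hW2]
      exact le_antisymm (csInf_le ⟨0, hSnonneg⟩ h0mem) (le_csInf ⟨0, h0mem⟩ hSnonneg)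
    rw [hW0, mul_zero, hρeq, sub_self, abs_zero]
  · -- main case : C ≥ 0
    set μ : Measure ℝ := ρ.map L with hμdef
    set ν : Measure ℝ := ρ'.map L with hνdef
    haveI : IsProbabilityMeasure μ := Measure.isProbabilityMeasure_map hLm.aemeasurable
    haveI : IsProbabilityMeasure ν := Measure.isProbabilityMeasure_map hLm.aemeasurable
    -- identification of quantile functions
    have hq : ∀ (σ : Measure (EuclideanSpace ℝ (Fin d))) (a : ℝ), quantile L σ a
        = sInf {q : ℝ | a ≤ ((σ.map L) (Iic q)).toReal} := by
      intro σ a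
      unfold quantile
      congr 1
      ext q
      simp only [mem_setOf_eq]
      rw [Measure.map_apply hLm measurableSet_Iic]
      rfl
    have hqQf : ∀ (σ : Measure (EuclideanSpace ℝ (Fin d))), ∀ a ∈ Ioo (β/2) β, quantile L σ a = Qf (σ.map L) a := by
      intro σ a ha
      have ha0 : 0 < a := lt_trans hu ha.1
      have ha1 : a < 1 := lt_of_lt_of_le ha.2 hβ1
      rw [hq, Qf, if_pos ⟨ha0, ha1⟩]
    -- second moments of the pushforwards
    have hmom : ∀ (σ : Measure (EuclideanSpace ℝ (Fin d))), IsProbabilityMeasure σ → Integrable (fun θ => ‖θ‖^2) σ →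
        ∫⁻ x, ENNReal.ofReal (x^2) ∂(σ.map L) < ⊤ := by
      intro σ hσ hint
      rw [lintegral_map (Measurable.ennreal_ofReal (measurable_id'.pow_const 2)) hLm]
      have hbound : ∀ θ : EuclideanSpace ℝ (Fin d), (L θ)^2 ≤ 2*(L 0)^2 + 2*C^2*‖θ‖^2 := by
        intro θ
        have h1 : |L θ - L 0| ≤ C * ‖θ - 0‖ := hL θ 0
        rw [sub_zero] at h1
        have h2 : |L θ| ≤ |L 0| + C * ‖θ‖ := by
          have := abs_sub_abs_le_abs_sub (L θ) (L 0)
          linarith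
        have h3 : |L θ|^2 ≤ (|L 0| + C*‖θ‖)^2 :=
          pow_le_pow_left₀ (abs_nonneg _) h2 2
        nlinarith [sq_nonneg (|L 0| - C*‖θ‖), sq_abs (L θ), sq_abs (L 0)]
      calc ∫⁻ θ, ENNReal.ofReal ((L θ)^2) ∂σ
          ≤ ∫⁻ θ, ENNReal.ofReal (2*(L 0)^2 + 2*C^2*‖θ‖^2) ∂σ :=
            lintegral_mono (fun θ => ENNReal.ofReal_le_ofReal (hbound θ))
        _ < ⊤ := by
            apply Integrable.lintegral_lt_top
            exact (integrable_const _).add ((hint.const_mul _))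
    -- integrability of Qf on the interval
    have hQfInt : ∀ (σ : Measure (EuclideanSpace ℝ (Fin d))), IsProbabilityMeasure σ → Integrable (fun θ => ‖θ‖^2) σ →
        IntegrableOn (Qf (σ.map L)) (Ioo (β/2) β) volume := by
      intro σ hσ hint
      haveI : IsProbabilityMeasure (σ.map L) := Measure.isProbabilityMeasure_map hLm.aemeasurable
      have hsq : ∫⁻ a in Ioo (β/2) β, ENNReal.ofReal ((Qf (σ.map L) a)^2) < ⊤ := by
        have hid : (σ.map L).map (fun x : ℝ => x) = σ.map L := Measure.map_id'
        have hzero : (σ.map L).map (fun _ : ℝ => (0:ℝ)) = Measure.dirac 0 := by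
          rw [Measure.map_const]
          simp
        have hcore := core_ineq (σ.map L) (X := fun x : ℝ => x) (Y := fun _ : ℝ => (0:ℝ))
          measurable_id measurable_const hu hβ1
        rw [hid, hzero] at hcore
        simp only [Qf_dirac_zero, sub_zero, id_eq] at hcore
        exact lt_of_le_of_lt hcore (hmom σ hσ hint)
      constructor
      · exact measurable_Qf.aestronglyMeasurable
      · rw [hasFiniteIntegral_iff_norm]
        calc ∫⁻ a in Ioo (β/2) β, ENNReal.ofReal ‖Qf (σ.map L) a‖
            ≤ ∫⁻ a in Ioo (β/2) β, (1 + ENNReal.ofReal ((Qf (σ.map L) a)^2)) := by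
              apply lintegral_mono
              intro a
              have h1 : ‖Qf (σ.map L) a‖ ≤ 1 + (Qf (σ.map L) a)^2 := by
                rw [Real.norm_eq_abs]
                nlinarith [sq_abs (Qf (σ.map L) a), sq_nonneg (|Qf (σ.map L) a| - 1)]
              calc ENNReal.ofReal ‖Qf (σ.map L) a‖
                  ≤ ENNReal.ofReal (1 + (Qf (σ.map L) a)^2) := ENNReal.ofReal_le_ofReal h1
                _ ≤ 1 + ENNReal.ofReal ((Qf (σ.map L) a)^2) := by
                    rw [ENNReal.ofReal_add (by norm_num) (sq_nonneg _)]
                    simp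
          _ = volume (Ioo (β/2) β) + ∫⁻ a in Ioo (β/2) β, ENNReal.ofReal ((Qf (σ.map L) a)^2) := by
              rw [lintegral_add_left measurable_const]
              simp
          _ < ⊤ := by
              apply ENNReal.add_lt_top.2
              exact ⟨lt_of_le_of_lt (le_of_eq Real.volume_Ioo) ENNReal.ofReal_lt_top, hsq⟩
    -- integrability
    have hIμ : IntegrableOn (Qf μ) (Ioo (β/2) β) volume := hQfInt ρ inferInstance hρ
    have hIν : IntegrableOn (Qf ν) (Ioo (β/2) β) volume := hQfInt ρ' inferInstance hρ'
    -- rewrite the interval integrals as set integrals over Ioo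
    have hIoc : ∀ f : ℝ → ℝ, (∫ a in Ioc (β/2) β, f a) = ∫ a in Ioo (β/2) β, f a := by
      intro f
      rw [← Measure.restrict_congr_set Ioo_ae_eq_Ioc]
    have hintρ : ∫ a in (β/2)..β, quantile L ρ a = ∫ a in Ioo (β/2) β, Qf μ a := by
      rw [intervalIntegral.integral_of_le huv.le, hIoc]
      exact setIntegral_congr_fun measurableSet_Ioo (fun a ha => hqQf ρ a ha)
    have hintρ' : ∫ a in (β/2)..β, quantile L ρ' a = ∫ a in Ioo (β/2) β, Qf ν a := by
      rw [intervalIntegral.integral_of_le huv.le, hIoc]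
      exact setIntegral_congr_fun measurableSet_Ioo (fun a ha => hqQf ρ' a ha)
    -- the per-coupling bound
    have hkey : ∀ c ∈ S, |(∫ a in (β/2)..β, quantile L ρ a) - ∫ a in (β/2)..β, quantile L ρ' a|
        ≤ (C * Real.sqrt (β/2)) * c := by
      rintro c ⟨π, hfst, hsnd, rfl⟩
      haveI : IsProbabilityMeasure π := by
        constructor
        have huniv : π.map Prod.fst univ = ρ univ := by rw [hfst]
        rw [Measure.map_apply measurable_fst MeasurableSet.univ, preimage_univ] at huniv
        rw [huniv, measure_univ]
      have hXm : Measurable (fun p : EuclideanSpace ℝ (Fin d) × EuclideanSpace ℝ (Fin d) =>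
        L p.1) := hLm.comp measurable_fst
      have hYm : Measurable (fun p : EuclideanSpace ℝ (Fin d) × EuclideanSpace ℝ (Fin d) =>
        L p.2) := hLm.comp measurable_snd
      have hXmap : π.map (fun p => L p.1) = μ := by
        rw [hμdef, ← hfst, Measure.map_map hLm measurable_fst]
        rfl
      have hYmap : π.map (fun p => L p.2) = ν := by
        rw [hνdef, ← hsnd, Measure.map_map hLm measurable_snd]
        rfl
      have hcore := core_ineq π hXm hYm hu hβ1
      rw [hXmap, hYmap] at hcore
      -- displacement integrability
      have hnormsm : ∀ i : Fin 2, AEStronglyMeasurable (fun θ : EuclideanSpace ℝ (Fin d) => ‖θ‖^2)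
          (π.map (if i = 0 then Prod.fst else Prod.snd)) :=
        fun i => (continuous_norm.pow 2).aestronglyMeasurable
      have h1 : Integrable (fun p : EuclideanSpace ℝ (Fin d) × EuclideanSpace ℝ (Fin d) =>
          ‖p.1‖^2) π := by
        have := hρ
        rw [← hfst] at this
        exact (integrable_map_measure (continuous_norm.pow 2).aestronglyMeasurable
          measurable_fst.aemeasurable).1 this
      have h2 : Integrable (fun p : EuclideanSpace ℝ (Fin d) × EuclideanSpace ℝ (Fin d) =>
          ‖p.2‖^2) π := by
        have := hρ'
        rw [← hsnd] at this
        exact (integrable_map_measure (continuous_norm.pow 2).aestronglyMeasurable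
          measurable_snd.aemeasurable).1 this
      have hDint : Integrable (fun p : EuclideanSpace ℝ (Fin d) × EuclideanSpace ℝ (Fin d) =>
          ‖p.1 - p.2‖^2) π := by
        apply Integrable.mono ((h1.const_mul 2).add (h2.const_mul 2))
          ((continuous_fst.sub continuous_snd).norm.pow 2).aestronglyMeasurable
        apply ae_of_all
        intro p
        have htri : ‖p.1 - p.2‖ ≤ ‖p.1‖ + ‖p.2‖ := norm_sub_le _ _
        have hb : ‖p.1 - p.2‖^2 ≤ 2*‖p.1‖^2 + 2*‖p.2‖^2 := by
          nlinarith [norm_nonneg (p.1 - p.2), norm_nonneg p.1, norm_nonneg p.2,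
            sq_nonneg (‖p.1‖ - ‖p.2‖)]
        show ‖‖p.1 - p.2‖^2‖ ≤ ‖2*‖p.1‖^2 + 2*‖p.2‖^2‖
        rw [Real.norm_eq_abs, Real.norm_eq_abs, abs_of_nonneg (by positivity),
          abs_of_nonneg (by positivity)]
        exact hb
      set Dπ : ℝ := ∫ p, ‖p.1 - p.2‖^2 ∂π with hDdef
      have hDnonneg : 0 ≤ Dπ := integral_nonneg (fun p => by positivity)
      -- Lipschitz bound on the right-hand side
      have hlin : ∫⁻ ω, ENNReal.ofReal ((L ω.1 - L ω.2)^2) ∂π ≤ ENNReal.ofReal (C^2 * Dπ) := by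
        have hpt : ∀ ω : EuclideanSpace ℝ (Fin d) × EuclideanSpace ℝ (Fin d),
            ENNReal.ofReal ((L ω.1 - L ω.2)^2) ≤ ENNReal.ofReal (C^2 * ‖ω.1 - ω.2‖^2) := by
          intro ω
          apply ENNReal.ofReal_le_ofReal
          have h := hL ω.1 ω.2
          have h2 : |L ω.1 - L ω.2|^2 ≤ (C * ‖ω.1 - ω.2‖)^2 :=
            pow_le_pow_left₀ (abs_nonneg _) h 2
          rw [sq_abs] at h2
          nlinarith
        calc ∫⁻ ω, ENNReal.ofReal ((L ω.1 - L ω.2)^2) ∂π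
            ≤ ∫⁻ ω, ENNReal.ofReal (C^2 * ‖ω.1 - ω.2‖^2) ∂π := lintegral_mono hpt
          _ = ENNReal.ofReal (∫ ω, C^2 * ‖ω.1 - ω.2‖^2 ∂π) := by
              rw [ofReal_integral_eq_lintegral_ofReal (hDint.const_mul _)
                (ae_of_all _ (fun ω => by positivity))]
          _ = ENNReal.ofReal (C^2 * Dπ) := by
              rw [integral_const_mul]
      -- Cauchy-Schwarz on the interval
      set D : ℝ → ℝ := fun a => Qf μ a - Qf ν a with hDfun
      have hDm : Measurable D := measurable_Qf.sub measurable_Qf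
      have hCS : ∫⁻ a in Ioo (β/2) β, ENNReal.ofReal |D a|
          ≤ (ENNReal.ofReal (C^2 * Dπ))^((1:ℝ)/2) * (ENNReal.ofReal (β/2))^((1:ℝ)/2) := by
        have hconj : Real.HolderConjugate 2 2 := ⟨by norm_num, by norm_num, by norm_num⟩
        have hH := ENNReal.lintegral_mul_le_Lp_mul_Lq (volume.restrict (Ioo (β/2) β)) hconj
          (f := fun a => ENNReal.ofReal |D a|) (g := fun _ => 1)
          (hDm.abs.ennreal_ofReal.aemeasurable) aemeasurable_const
        simp only [Pi.mul_apply, mul_one, ENNReal.one_rpow] at hH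
        have hg : ∫⁻ _ in Ioo (β/2) β, (1:ℝ≥0∞) = ENNReal.ofReal (β/2) := by
          rw [setLIntegral_one, Real.volume_Ioo]
          congr 1
          ring
        rw [hg] at hH
        have hf2 : ∫⁻ a in Ioo (β/2) β, (ENNReal.ofReal |D a|)^(2:ℝ)
            = ∫⁻ a in Ioo (β/2) β, ENNReal.ofReal ((D a)^2) := by
          apply lintegral_congr
          intro a
          rw [ENNReal.ofReal_rpow_of_nonneg (abs_nonneg _) (by norm_num)]
          congr 1
          rw [show (2:ℝ) = ((2:ℕ):ℝ) by norm_num, Real.rpow_natCast, sq_abs]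
        rw [hf2] at hH
        refine le_trans hH ?_
        apply mul_le_mul_left
        apply ENNReal.rpow_le_rpow _ (by norm_num)
        exact le_trans hcore hlin
      -- pass to real numbers
      have hD2fin : (ENNReal.ofReal (C^2 * Dπ))^((1:ℝ)/2) * (ENNReal.ofReal (β/2))^((1:ℝ)/2) ≠ ⊤ := by
        apply ENNReal.mul_ne_top
        · exact ENNReal.rpow_ne_top_of_nonneg (by norm_num) ENNReal.ofReal_ne_top
        · exact ENNReal.rpow_ne_top_of_nonneg (by norm_num) ENNReal.ofReal_ne_top
      have habs : |(∫ a in (β/2)..β, quantile L ρ a) - ∫ a in (β/2)..β, quantile L ρ' a|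
          ≤ ∫ a in Ioo (β/2) β, |D a| := by
        rw [hintρ, hintρ', ← integral_sub hIμ hIν]
        have hni := norm_integral_le_integral_norm (μ := volume.restrict (Ioo (β/2) β))
          (f := fun a => Qf μ a - Qf ν a)
        simpa [Real.norm_eq_abs] using hni
      have heq1 : ∫ a in Ioo (β/2) β, |D a|
          = (∫⁻ a in Ioo (β/2) β, ENNReal.ofReal |D a|).toReal := by
        rw [integral_eq_lintegral_of_nonneg_ae (ae_of_all _ (fun a => abs_nonneg (D a)))
          hDm.abs.aestronglyMeasurable]
      have htoReal : ((ENNReal.ofReal (C^2 * Dπ))^((1:ℝ)/2)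
          * (ENNReal.ofReal (β/2))^((1:ℝ)/2)).toReal
          = Real.sqrt (C^2 * Dπ) * Real.sqrt (β/2) := by
        rw [ENNReal.toReal_mul, ← ENNReal.toReal_rpow, ← ENNReal.toReal_rpow,
          ENNReal.toReal_ofReal (by positivity), ENNReal.toReal_ofReal (by linarith),
          ← Real.sqrt_eq_rpow, ← Real.sqrt_eq_rpow]
      have hsqrtC : Real.sqrt (C^2 * Dπ) = C * Real.sqrt Dπ := by
        rw [Real.sqrt_mul (sq_nonneg C), Real.sqrt_sq hC]
      calc |(∫ a in (β/2)..β, quantile L ρ a) - ∫ a in (β/2)..β, quantile L ρ' a|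
          ≤ ∫ a in Ioo (β/2) β, |D a| := habs
        _ = (∫⁻ a in Ioo (β/2) β, ENNReal.ofReal |D a|).toReal := heq1
        _ ≤ ((ENNReal.ofReal (C^2 * Dπ))^((1:ℝ)/2) * (ENNReal.ofReal (β/2))^((1:ℝ)/2)).toReal :=
            ENNReal.toReal_mono hD2fin hCS
        _ = Real.sqrt (C^2 * Dπ) * Real.sqrt (β/2) := htoReal
        _ = (C * Real.sqrt (β/2)) * Real.sqrt Dπ := by rw [hsqrtC]; ring
    -- conclude by taking the infimum over couplings
    set k : ℝ := C * Real.sqrt (β/2) with hkdef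
    have hk0 : 0 ≤ k := mul_nonneg hC (Real.sqrt_nonneg _)
    rcases eq_or_lt_of_le hk0 with hk | hk
    · obtain ⟨c₀, hc₀⟩ := hSne
      have := hkey c₀ hc₀
      rw [← hk, zero_mul] at this
      calc |(∫ a in (β/2)..β, quantile L ρ a) - ∫ a in (β/2)..β, quantile L ρ' a| ≤ 0 := this
        _ = k * W2 ρ ρ' := by rw [← hk, zero_mul]
    · have hinf : |(∫ a in (β/2)..β, quantile L ρ a) - ∫ a in (β/2)..β, quantile L ρ' a| / k
          ≤ sInf S := by
        apply le_csInf hSne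
        intro c hc
        rw [div_le_iff₀ hk]
        calc |(∫ a in (β/2)..β, quantile L ρ a) - ∫ a in (β/2)..β, quantile L ρ' a|
            ≤ k * c := hkey c hc
          _ = c * k := mul_comm _ _
      rw [hW2]
      calc |(∫ a in (β/2)..β, quantile L ρ a) - ∫ a in (β/2)..β, quantile L ρ' a|
          = (|(∫ a in (β/2)..β, quantile L ρ a) - ∫ a in (β/2)..β, quantile L ρ' a| / k) * k := by
            field_simp
        _ ≤ sInf S * k := mul_le_mul_of_nonneg_right hinf hk0
        _ = k * sInf S := mul_comm _ _



end
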